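/- As l → 0⁺, for fixed λ > 0, N(λ,l) := (√λ − l)(√(λ+l²) + √(1+l²)) + (l − √(λ+l²))(√λ + 1) satisfies N(λ,l) = ((λ−1)/(2√λ)) l² + O(l³). -/

import Mathlib

open Filter Asymptotics

/-- Pointwise algebraic identity. -/
lemma key_identity (a b c l : ℝ) (ha : 0 < a) (hb : 0 < b) (hc : 0 < c)
    (hb2 : b ^ 2 = 1 + l ^ 2) (hc2 : c ^ 2 = a ^ 2 + l ^ 2) :
    (a - l) * (c + b) + (l - c) * (a + 1) - ((a ^ 2 - 1) / (2 * a)) * l ^ 2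
      = l ^ 3 * (l * (1 / (2 * a * (a + c) ^ 2) - a / (2 * (1 + b) ^ 2))
          - (1 / (a + c) + 1 / (1 + b))) := by
  have h1 : b - 1 = l ^ 2 / (1 + b) := by
    rw [eq_div_iff (by positivity)]
    linear_combination hb2
  have h2 : c - a = l ^ 2 / (a + c) := by
    rw [eq_div_iff (by positivity)]
    linear_combination hc2
  have h3 : b - 1 - l ^ 2 / 2 = -l ^ 4 / (2 * (1 + b) ^ 2) := by
    rw [eq_div_iff (by positivity)]
    linear_combination (2+2*b-l^2) * hb2
  have h4 : c - a - l ^ 2 / (2 * a) = -l ^ 4 / (2 * a * (a + c) ^ 2) := by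
    field_simp
    linear_combination (2*a^2+2*a*c-l^2) * hc2
  have hsplit : (a - l) * (c + b) + (l - c) * (a + 1) - ((a ^ 2 - 1) / (2 * a)) * l ^ 2
      = a * (b - 1 - l ^ 2 / 2) - (c - a - l ^ 2 / (2 * a)) - l * (c - a) - l * (b - 1) := by
    field_simp
    ring
  rw [hsplit, h3, h4, h2, h1]
  ring

theorem stmt_10 (lam : ℝ) (hlam : 0 < lam) :
    (fun l : ℝ =>
        ((Real.sqrt lam - l) * (Real.sqrt (lam + l ^ 2) + Real.sqrt (1 + l ^ 2)) +
          (l - Real.sqrt (lam + l ^ 2)) * (Real.sqrt lam + 1)) -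
        ((lam - 1) / (2 * Real.sqrt lam)) * l ^ 2)
      =O[nhdsWithin 0 (Set.Ioi 0)] fun l : ℝ => l ^ 3 := by
  set a := Real.sqrt lam with ha_def
  have ha : 0 < a := Real.sqrt_pos.mpr hlam
  have ha2 : a ^ 2 = lam := Real.sq_sqrt hlam.le
  set h : ℝ → ℝ := fun l =>
    l * (1 / (2 * a * (a + Real.sqrt (lam + l ^ 2)) ^ 2)
          - a / (2 * (1 + Real.sqrt (1 + l ^ 2)) ^ 2))
      - (1 / (a + Real.sqrt (lam + l ^ 2)) + 1 / (1 + Real.sqrt (1 + l ^ 2))) with hh_def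
  have heq : ∀ l : ℝ,
      ((a - l) * (Real.sqrt (lam + l ^ 2) + Real.sqrt (1 + l ^ 2)) +
          (l - Real.sqrt (lam + l ^ 2)) * (a + 1)) -
        ((lam - 1) / (2 * a)) * l ^ 2 = l ^ 3 * h l := by
    intro l
    have hb : 0 < Real.sqrt (1 + l ^ 2) := Real.sqrt_pos.mpr (by positivity)
    have hc : 0 < Real.sqrt (lam + l ^ 2) := Real.sqrt_pos.mpr (by positivity)
    have hb2 : (Real.sqrt (1 + l ^ 2)) ^ 2 = 1 + l ^ 2 := Real.sq_sqrt (by positivity)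
    have hc2 : (Real.sqrt (lam + l ^ 2)) ^ 2 = a ^ 2 + l ^ 2 := by
      rw [ha2]; exact Real.sq_sqrt (by positivity)
    have := key_identity a (Real.sqrt (1 + l ^ 2)) (Real.sqrt (lam + l ^ 2)) l ha hb hc hb2 hc2
    rw [hh_def]
    rw [← ha2] at this ⊢
    linarith [this]
  have hfun : (fun l : ℝ =>
        ((Real.sqrt lam - l) * (Real.sqrt (lam + l ^ 2) + Real.sqrt (1 + l ^ 2)) +
          (l - Real.sqrt (lam + l ^ 2)) * (Real.sqrt lam + 1)) -
        ((lam - 1) / (2 * Real.sqrt lam)) * l ^ 2) = fun l => l ^ 3 * h l := by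
    funext l
    exact heq l
  rw [hfun]
  -- continuity of h at 0
  have hsq1 : Continuous fun l : ℝ => Real.sqrt (1 + l ^ 2) :=
    Real.continuous_sqrt.comp (by continuity)
  have hsq2 : Continuous fun l : ℝ => Real.sqrt (lam + l ^ 2) :=
    Real.continuous_sqrt.comp (by continuity)
  have hd1 : ∀ l : ℝ, 0 < a + Real.sqrt (lam + l ^ 2) := fun l =>
    add_pos ha (Real.sqrt_pos.mpr (by positivity))
  have hd2 : ∀ l : ℝ, 0 < 1 + Real.sqrt (1 + l ^ 2) := fun l =>
    add_pos one_pos (Real.sqrt_pos.mpr (by positivity))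
  have hcont : Continuous h := by
    rw [hh_def]
    apply Continuous.sub
    · apply Continuous.mul continuous_id
      apply Continuous.sub
      · apply Continuous.div continuous_const
        · exact (continuous_const.mul (((continuous_const.add hsq2).pow 2)))
        · intro l
          have := hd1 l
          positivity
      · apply Continuous.div continuous_const
        · exact (continuous_const.mul (((continuous_const.add hsq1).pow 2)))
        · intro l
          have := hd2 l
          positivity
    · apply Continuous.add
      · apply Continuous.div continuous_const (continuous_const.add hsq2)
        intro l; exact (hd1 l).ne'
      · apply Continuous.div continuous_const (continuous_const.add hsq1)
        intro l; exact (hd2 l).ne'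
  have hbig : h =O[nhdsWithin 0 (Set.Ioi 0)] (fun _ : ℝ => (1 : ℝ)) := by
    apply Filter.Tendsto.isBigO_one
    exact (hcont.tendsto 0).mono_left nhdsWithin_le_nhds
  have := (isBigO_refl (fun l : ℝ => l ^ 3) (nhdsWithin 0 (Set.Ioi 0))).mul hbig
  simpa using this
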